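/- Let G be a DAG with an ample framing F and no idle edges. Then every inner vertex v of G satisfies indeg(v) = 2 = outdeg(v), i.e., G is full. -/

import Mathlib

/-- A finite directed acyclic multigraph. -/
structure DAG where
  V : Type
  E : Type
  [fintypeV : Fintype V]
  [fintypeE : Fintype E]
  [decEqV : DecidableEq V]
  [decEqE : DecidableEq E]
  src : E → V
  tgt : E → V
  acyclic : ∀ v : V,
    ¬ Relation.TransGen (fun a b : V => ∃ e : E, src e = a ∧ tgt e = b) v v

attribute [instance] DAG.fintypeV DAG.fintypeE DAG.decEqV DAG.decEqE

namespace DAG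

variable (G : DAG)

/-- A vertex with no incoming edges. -/
def IsSource (v : G.V) : Prop := ∀ e : G.E, G.tgt e ≠ v

/-- A vertex with no outgoing edges. -/
def IsSink (v : G.V) : Prop := ∀ e : G.E, G.src e ≠ v

/-- An inner vertex is neither a source nor a sink. -/
def IsInner (v : G.V) : Prop := ¬ G.IsSource v ∧ ¬ G.IsSink v

instance : DecidablePred G.IsSource := fun v =>
  decidable_of_iff (∀ e : G.E, G.tgt e ≠ v) Iff.rfl

instance : DecidablePred G.IsSink := fun v =>
  decidable_of_iff (∀ e : G.E, G.src e ≠ v) Iff.rfl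

instance : DecidablePred G.IsInner := fun v =>
  decidable_of_iff (¬ G.IsSource v ∧ ¬ G.IsSink v) Iff.rfl

/-- In-degree: the number of edges with target `v`. -/
def indeg (v : G.V) : ℕ := Fintype.card {e : G.E // G.tgt e = v}

/-- Out-degree: the number of edges with source `v`. -/
def outdeg (v : G.V) : ℕ := Fintype.card {e : G.E // G.src e = v}

/-- A DAG is full if every inner vertex has in-degree 2 and out-degree 2. -/
def Full : Prop := ∀ v : G.V, G.IsInner v → G.indeg v = 2 ∧ G.outdeg v = 2

/-- A route: a maximal directed path, i.e. a nonempty list of consecutive edges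
starting at a source and ending at a sink. -/
structure Route where
  edges : List G.E
  ne : edges ≠ []
  chain : edges.Chain' (fun e f => G.tgt e = G.src f)
  source_start : G.IsSource (G.src (edges.head ne))
  sink_end : G.IsSink (G.tgt (edges.getLast ne))

/-- A route visits a vertex if the vertex is an endpoint of one of its edges. -/
def Route.visits (R : G.Route) (v : G.V) : Prop :=
  ∃ e ∈ R.edges, G.src e = v ∨ G.tgt e = v

/-- A framing: a linear order on the incoming edges and a linear order on the
outgoing edges of every inner vertex. -/
structure Framing where
  inlt : G.E → G.E → Prop
  outlt : G.E → G.E → Prop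
  inlt_tgt : ∀ {e f}, inlt e f → G.tgt e = G.tgt f
  inlt_inner : ∀ {e f}, inlt e f → G.IsInner (G.tgt e)
  inlt_irrefl : ∀ e, ¬ inlt e e
  inlt_trans : ∀ {e f g}, inlt e f → inlt f g → inlt e g
  inlt_total : ∀ e f, G.tgt e = G.tgt f → G.IsInner (G.tgt e) → e ≠ f →
    inlt e f ∨ inlt f e
  outlt_src : ∀ {e f}, outlt e f → G.src e = G.src f
  outlt_inner : ∀ {e f}, outlt e f → G.IsInner (G.src e)
  outlt_irrefl : ∀ e, ¬ outlt e e
  outlt_trans : ∀ {e f g}, outlt e f → outlt f g → outlt e g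
  outlt_total : ∀ e f, G.src e = G.src f → G.IsInner (G.src e) → e ≠ f →
    outlt e f ∨ outlt f e

/-- The induced order on paths ending at a common vertex: compare the two edges
just before the longest common suffix. -/
def inPathLt (F : G.Framing) (P Q : List G.E) : Prop :=
  ∃ (p q s : List G.E) (e f : G.E), e ≠ f ∧
    P = p ++ e :: s ∧ Q = q ++ f :: s ∧ F.inlt e f

/-- The induced order on paths starting at a common vertex: compare the two edges
just after the longest common prefix. -/
def outPathLt (F : G.Framing) (P Q : List G.E) : Prop :=
  ∃ (s p q : List G.E) (e f : G.E), e ≠ f ∧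
    P = s ++ e :: p ∧ Q = s ++ f :: q ∧ F.outlt e f

/-- Routes `P` and `Q` are in conflict (with `P` playing the first role) if they
pass through a common inner vertex `v` with `Pv ≺ Qv` in the in-order and
`vQ ≺ vP` in the out-order. -/
def Conflict (F : G.Framing) (P Q : G.Route) : Prop :=
  ∃ (v : G.V) (a b c d : List G.E) (ea ec : G.E),
    P.edges = a ++ [ea] ++ b ∧ Q.edges = c ++ [ec] ++ d ∧
    G.tgt ea = v ∧ G.tgt ec = v ∧ b ≠ [] ∧ d ≠ [] ∧
    G.inPathLt F (a ++ [ea]) (c ++ [ec]) ∧ G.outPathLt F d b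

/-- Two routes are coherent if they are not in conflict at any common inner
vertex (in either order). -/
def CoherentPair (F : G.Framing) (P Q : G.Route) : Prop :=
  ¬ G.Conflict F P Q ∧ ¬ G.Conflict F Q P

/-- A route is exceptional if it is coherent with every route. -/
def Exceptional (F : G.Framing) (R : G.Route) : Prop :=
  ∀ S : G.Route, G.CoherentPair F R S

/-- An edge is idle if it is the unique incoming or the unique outgoing edge of
an inner vertex. -/
def Idle (e : G.E) : Prop :=
  (G.IsInner (G.tgt e) ∧ ∀ f : G.E, G.tgt f = G.tgt e → f = e) ∨
  (G.IsInner (G.src e) ∧ ∀ f : G.E, G.src f = G.src e → f = e)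

/-- A framing is ample if every non-idle edge lies on an exceptional route. -/
def Ample (F : G.Framing) : Prop :=
  ∀ e : G.E, ¬ G.Idle e → ∃ R : G.Route, G.Exceptional F R ∧ e ∈ R.edges

/-- `e` is smallest among the edges entering its target. -/
def MinIn (F : G.Framing) (e : G.E) : Prop :=
  ∀ f : G.E, G.tgt f = G.tgt e → f ≠ e → F.inlt e f

/-- `e` is largest among the edges entering its target. -/
def MaxIn (F : G.Framing) (e : G.E) : Prop :=
  ∀ f : G.E, G.tgt f = G.tgt e → f ≠ e → F.inlt f e

/-- `e` is smallest among the edges leaving its source. -/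
def MinOut (F : G.Framing) (e : G.E) : Prop :=
  ∀ f : G.E, G.src f = G.src e → f ≠ e → F.outlt e f

/-- `e` is largest among the edges leaving its source. -/
def MaxOut (F : G.Framing) (e : G.E) : Prop :=
  ∀ f : G.E, G.src f = G.src e → f ≠ e → F.outlt f e

/-- The characteristic vector of a route. -/
noncomputable def charVec (R : G.Route) : G.E → ℝ :=
  fun e => if e ∈ R.edges then 1 else 0

end DAG

namespace DAG

variable (G : DAG)

/-- One-step reachability. -/
def Step (a b : G.V) : Prop := ∃ e : G.E, G.src e = a ∧ G.tgt e = b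

/-- `l` is a consecutive list of edges starting at `v`. -/
def IsPathFrom : G.V → List G.E → Prop
  | _, [] => True
  | v, e :: l => G.src e = v ∧ IsPathFrom (G.tgt e) l

/-- Endpoint of a path starting at `v`. -/
def endAt : G.V → List G.E → G.V
  | v, [] => v
  | _, e :: l => endAt (G.tgt e) l

/-- `l` is a reversed consecutive list of edges ending at `v`. -/
def IsCoPathFrom : G.V → List G.E → Prop
  | _, [] => True
  | v, e :: l => G.tgt e = v ∧ IsCoPathFrom (G.src e) l

def coEndAt : G.V → List G.E → G.V
  | v, [] => v
  | _, e :: l => coEndAt (G.src e) l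

lemma wf_fwd : WellFounded (fun a b : G.V => Relation.TransGen G.Step b a) := by
  haveI : IsTrans G.V (fun a b : G.V => Relation.TransGen G.Step b a) :=
    ⟨fun _ _ _ h1 h2 => h2.trans h1⟩
  haveI : IsIrrefl G.V (fun a b : G.V => Relation.TransGen G.Step b a) :=
    ⟨fun v h => G.acyclic v h⟩
  exact Finite.wellFounded_of_trans_of_irrefl _

lemma wf_bwd : WellFounded (fun a b : G.V => Relation.TransGen G.Step a b) := by
  haveI : IsTrans G.V (fun a b : G.V => Relation.TransGen G.Step a b) :=
    ⟨fun _ _ _ h1 h2 => h1.trans h2⟩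
  haveI : IsIrrefl G.V (fun a b : G.V => Relation.TransGen G.Step a b) :=
    ⟨fun v h => G.acyclic v h⟩
  exact Finite.wellFounded_of_trans_of_irrefl _

lemma exists_path_to_sink (v : G.V) :
    ∃ l : List G.E, G.IsPathFrom v l ∧ G.IsSink (G.endAt v l) := by
  induction v using (G.wf_fwd).induction with
  | _ v ih =>
    by_cases hs : G.IsSink v
    · exact ⟨[], trivial, hs⟩
    · simp only [DAG.IsSink, not_forall, not_not] at hs
      obtain ⟨e, he⟩ := hs
      obtain ⟨l, hl, hsink⟩ := ih (G.tgt e) (Relation.TransGen.single ⟨e, he, rfl⟩)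
      exact ⟨e :: l, ⟨he, hl⟩, hsink⟩

lemma exists_copath_to_source (v : G.V) :
    ∃ l : List G.E, G.IsCoPathFrom v l ∧ G.IsSource (G.coEndAt v l) := by
  induction v using (G.wf_bwd).induction with
  | _ v ih =>
    by_cases hs : G.IsSource v
    · exact ⟨[], trivial, hs⟩
    · simp only [DAG.IsSource, not_forall, not_not] at hs
      obtain ⟨e, he⟩ := hs
      obtain ⟨l, hl, hsrc⟩ := ih (G.src e) (Relation.TransGen.single ⟨e, rfl, he⟩)
      exact ⟨e :: l, ⟨he, hl⟩, hsrc⟩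

lemma isPathFrom_append {v : G.V} {l₁ l₂ : List G.E}
    (h1 : G.IsPathFrom v l₁) (h2 : G.IsPathFrom (G.endAt v l₁) l₂) :
    G.IsPathFrom v (l₁ ++ l₂) := by
  induction l₁ generalizing v with
  | nil => exact h2
  | cons e l ih => exact ⟨h1.1, ih h1.2 h2⟩

lemma endAt_append (v : G.V) (l₁ l₂ : List G.E) :
    G.endAt v (l₁ ++ l₂) = G.endAt (G.endAt v l₁) l₂ := by
  induction l₁ generalizing v with
  | nil => rfl
  | cons e l ih => exact ih (G.tgt e)

lemma isPathFrom_reverse {v : G.V} {l : List G.E} (h : G.IsCoPathFrom v l) :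
    G.IsPathFrom (G.coEndAt v l) l.reverse ∧ G.endAt (G.coEndAt v l) l.reverse = v := by
  induction l generalizing v with
  | nil => exact ⟨trivial, rfl⟩
  | cons e l ih =>
    obtain ⟨ht, hc⟩ := h
    obtain ⟨hp, he⟩ := ih hc
    have hco : G.coEndAt v (e :: l) = G.coEndAt (G.src e) l := rfl
    have hone : G.IsPathFrom (G.src e) [e] := ⟨rfl, trivial⟩
    refine ⟨?_, ?_⟩
    · rw [List.reverse_cons, hco]
      exact G.isPathFrom_append hp (by rw [he]; exact hone)
    · rw [List.reverse_cons, hco, G.endAt_append, he]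
      exact ht

lemma chain'_of_isPathFrom {v : G.V} {l : List G.E} (h : G.IsPathFrom v l) :
    l.Chain' (fun e f => G.tgt e = G.src f) := by
  induction l generalizing v with
  | nil => exact List.isChain_nil
  | cons e l ih =>
    cases l with
    | nil => exact List.isChain_singleton _
    | cons f m => exact List.isChain_cons_cons.mpr ⟨(h.2.1).symm, ih h.2⟩

lemma head_of_isPathFrom {v : G.V} {l : List G.E} (h : G.IsPathFrom v l) (hne : l ≠ []) :
    G.src (l.head hne) = v := by
  cases l with
  | nil => exact absurd rfl hne
  | cons e m => exact h.1

lemma getLast_of_isPathFrom {v : G.V} {l : List G.E} (h : G.IsPathFrom v l) (hne : l ≠ []) :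
    G.tgt (l.getLast hne) = G.endAt v l := by
  induction l generalizing v with
  | nil => exact absurd rfl hne
  | cons e m ih =>
    cases m with
    | nil => rfl
    | cons f m' => exact ih h.2 (by simp)

/-- Any consecutive pair of edges lies on some route. -/
lemma exists_route_through (e f : G.E) (hef : G.tgt e = G.src f) :
    ∃ (S : G.Route) (c d : List G.E), S.edges = c ++ [e] ++ f :: d := by
  obtain ⟨l, hl, hsrc⟩ := G.exists_copath_to_source (G.src e)
  obtain ⟨m, hm, hsink⟩ := G.exists_path_to_sink (G.tgt f)
  obtain ⟨hrev, hend⟩ := G.isPathFrom_reverse hl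
  set v0 := G.coEndAt (G.src e) l with hv0
  have hpath : G.IsPathFrom v0 (l.reverse ++ e :: f :: m) := by
    refine G.isPathFrom_append hrev ?_
    rw [hend]
    exact ⟨rfl, hef.symm, hm⟩
  have hne : (l.reverse ++ e :: f :: m) ≠ [] := by simp
  have hendL : G.endAt v0 (l.reverse ++ e :: f :: m) = G.endAt (G.tgt f) m := by
    rw [G.endAt_append, hend]; rfl
  refine ⟨⟨l.reverse ++ e :: f :: m, hne, G.chain'_of_isPathFrom hpath, ?_, ?_⟩, l.reverse, m, by simp⟩
  · rw [G.head_of_isPathFrom hpath hne]; exact hsrc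
  · rw [G.getLast_of_isPathFrom hpath hne, hendL]; exact hsink

/-- If `tgt e` is not a sink, an edge `e` on a route has a successor on the route. -/
lemma route_succ (R : G.Route) (e : G.E) (he : e ∈ R.edges) (h : ¬ G.IsSink (G.tgt e)) :
    ∃ (a b : List G.E) (f : G.E), R.edges = a ++ [e] ++ f :: b ∧ G.src f = G.tgt e := by
  obtain ⟨a, t, hat⟩ := List.append_of_mem he
  cases t with
  | nil =>
    exfalso
    apply h
    have hlast : R.edges.getLast R.ne = e := by
      have : (a ++ [e]).getLast (by simp) = e := by
        rw [List.getLast_append]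
        simp
      simpa [hat] using this
    have := R.sink_end
    rwa [hlast] at this
  | cons f b =>
    refine ⟨a, b, f, by simpa using hat, ?_⟩
    have hchain := R.chain
    rw [hat] at hchain
    have := (List.isChain_append.mp hchain).2.1
    exact ((List.isChain_cons_cons.mp this).1).symm

/-- If `src f` is not a source, an edge `f` on a route has a predecessor on the route. -/
lemma route_pred (R : G.Route) (f : G.E) (hf : f ∈ R.edges) (h : ¬ G.IsSource (G.src f)) :
    ∃ (a b : List G.E) (e : G.E), R.edges = a ++ [e] ++ f :: b ∧ G.tgt e = G.src f := by
  obtain ⟨a, t, hat⟩ := List.append_of_mem hf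
  rcases a.eq_nil_or_concat with rfl | ⟨a', e, rfl⟩
  · exfalso
    apply h
    have hhead : R.edges.head R.ne = f := by simp [hat]
    have := R.source_start
    rwa [hhead] at this
  · refine ⟨a', t, e, by simp [hat], ?_⟩
    have hchain := R.chain
    rw [hat] at hchain
    have : (a' ++ (e :: f :: t)).Chain' (fun e f => G.tgt e = G.src f) := by
      simpa using hchain
    exact ((List.isChain_cons_cons.mp (List.isChain_append.mp this).2.1).1)

/-- Construct a conflict from local data. -/
lemma conflict_of (F : G.Framing) (R S : G.Route) (p q c d : List G.E) (b g e' f' : G.E)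
    (hR : R.edges = p ++ [b] ++ g :: q) (hS : S.edges = c ++ [e'] ++ f' :: d)
    (htgt : G.tgt e' = G.tgt b)
    (h1 : F.inlt b e') (h2 : F.outlt f' g) : G.Conflict F R S := by
  refine ⟨G.tgt b, p, g :: q, c, f' :: d, b, e', hR, hS, rfl, htgt, by simp, by simp, ?_, ?_⟩
  · exact ⟨p, c, [], b, e', fun hbe => F.inlt_irrefl b (hbe ▸ h1), by simp, by simp, h1⟩
  · exact ⟨[], d, q, f', g, fun hfg => F.outlt_irrefl g (hfg ▸ h2), rfl, rfl, h2⟩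

/-- Among three pairwise comparable elements there is a middle one. -/
lemma exists_middle {α : Type} {lt : α → α → Prop} {x y z : α}
    (hxy : lt x y ∨ lt y x) (hyz : lt y z ∨ lt z y) (hxz : lt x z ∨ lt z x) :
    ∃ m a c, (m = x ∨ m = y ∨ m = z) ∧ lt a m ∧ lt m c := by
  rcases hxy with h1 | h1 <;> rcases hyz with h2 | h2 <;> rcases hxz with h3 | h3
  · exact ⟨y, x, z, Or.inr (Or.inl rfl), h1, h2⟩
  · exact ⟨y, x, z, Or.inr (Or.inl rfl), h1, h2⟩
  · exact ⟨z, x, y, Or.inr (Or.inr rfl), h3, h2⟩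
  · exact ⟨x, z, y, Or.inl rfl, h3, h1⟩
  · exact ⟨x, y, z, Or.inl rfl, h1, h3⟩
  · exact ⟨z, y, x, Or.inr (Or.inr rfl), h2, h3⟩
  · exact ⟨y, z, x, Or.inr (Or.inl rfl), h2, h1⟩
  · exact ⟨y, z, x, Or.inr (Or.inl rfl), h2, h1⟩

end DAG

/-- A DAG with an ample framing and no idle edges is full:
every inner vertex has in-degree 2 and out-degree 2. -/
theorem ample_no_idle_implies_full (G : DAG) (F : G.Framing)
    (hample : G.Ample F) (hnoidle : ∀ e : G.E, ¬ G.Idle e) :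
    G.Full := by
  intro v hv
  have hns : ¬ G.IsSource v := hv.1
  have hnk : ¬ G.IsSink v := hv.2
  simp only [DAG.IsSource, not_forall, not_not] at hns
  obtain ⟨e0, he0⟩ := hns
  simp only [DAG.IsSink, not_forall, not_not] at hnk
  obtain ⟨f0, hf0⟩ := hnk
  have hin2 : ∃ e1, G.tgt e1 = v ∧ e1 ≠ e0 := by
    by_contra hcon
    push_neg at hcon
    exact hnoidle e0 (Or.inl ⟨by rwa [he0], fun f hf => hcon f (hf.trans he0)⟩)
  obtain ⟨e1, he1, he1ne⟩ := hin2
  have hout2 : ∃ f1, G.src f1 = v ∧ f1 ≠ f0 := by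
    by_contra hcon
    push_neg at hcon
    exact hnoidle f0 (Or.inr ⟨by rwa [hf0], fun f hf => hcon f (hf.trans hf0)⟩)
  obtain ⟨f1, hf1, hf1ne⟩ := hout2
  have hinlt : 1 < G.indeg v :=
    Fintype.one_lt_card_iff.mpr ⟨⟨e1, he1⟩, ⟨e0, he0⟩, by simp [he1ne]⟩
  have houtlt : 1 < G.outdeg v :=
    Fintype.one_lt_card_iff.mpr ⟨⟨f1, hf1⟩, ⟨f0, hf0⟩, by simp [hf1ne]⟩
  have hin_le : ¬ 2 < G.indeg v := by
    intro hlt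
    obtain ⟨a, b, c, hab, hac, hbc⟩ := Fintype.two_lt_card_iff.mp hlt
    have hinn : ∀ e : {e : G.E // G.tgt e = v}, G.IsInner (G.tgt e.1) := fun e => by
      rw [e.2]; exact hv
    have cmp : ∀ x y : {e : G.E // G.tgt e = v}, x ≠ y →
        F.inlt x.1 y.1 ∨ F.inlt y.1 x.1 := fun x y hxy =>
      F.inlt_total x.1 y.1 (x.2.trans y.2.symm) (hinn x) (fun h => hxy (Subtype.ext h))
    obtain ⟨m, x, z, hmem, hxm, hmz⟩ :=
      DAG.exists_middle (cmp a b hab) (cmp b c hbc) (cmp a c hac)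
    have htm : G.tgt m = v := by
      rcases hmem with rfl | rfl | rfl
      exacts [a.2, b.2, c.2]
    obtain ⟨R, hRexc, hmR⟩ := hample m (hnoidle m)
    obtain ⟨p, q, g, hRedges, hgsrc⟩ := G.route_succ R m hmR (by rw [htm]; exact hv.2)
    have hsrcg : G.src g = v := hgsrc.trans htm
    have hf' : ∃ f', G.src f' = v ∧ f' ≠ g := by
      by_cases h : f0 = g
      · exact ⟨f1, hf1, fun hh => hf1ne (hh.trans h.symm)⟩
      · exact ⟨f0, hf0, h⟩
    obtain ⟨f', hf'src, hf'g⟩ := hf'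
    rcases F.outlt_total f' g (hf'src.trans hsrcg.symm) (by rw [hf'src]; exact hv) hf'g
      with hl | hl
    · have htz : G.tgt z = G.src f' := (F.inlt_tgt hmz).symm.trans (htm.trans hf'src.symm)
      obtain ⟨S, c', d', hS⟩ := G.exists_route_through z f' htz
      exact (hRexc S).1 (G.conflict_of F R S p q c' d' m g z f' hRedges hS
        (F.inlt_tgt hmz).symm hmz hl)
    · have htx : G.tgt x = G.src f' := (F.inlt_tgt hxm).trans (htm.trans hf'src.symm)
      obtain ⟨S, c', d', hS⟩ := G.exists_route_through x f' htx
      exact (hRexc S).2 (G.conflict_of F S R c' d' p q x f' m g hS hRedges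
        (F.inlt_tgt hxm).symm hxm hl)
  have hout_le : ¬ 2 < G.outdeg v := by
    intro hlt
    obtain ⟨a, b, c, hab, hac, hbc⟩ := Fintype.two_lt_card_iff.mp hlt
    have hinn : ∀ e : {e : G.E // G.src e = v}, G.IsInner (G.src e.1) := fun e => by
      rw [e.2]; exact hv
    have cmp : ∀ x y : {e : G.E // G.src e = v}, x ≠ y →
        F.outlt x.1 y.1 ∨ F.outlt y.1 x.1 := fun x y hxy =>
      F.outlt_total x.1 y.1 (x.2.trans y.2.symm) (hinn x) (fun h => hxy (Subtype.ext h))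
    obtain ⟨m, x, z, hmem, hxm, hmz⟩ :=
      DAG.exists_middle (cmp a b hab) (cmp b c hbc) (cmp a c hac)
    have hsm : G.src m = v := by
      rcases hmem with rfl | rfl | rfl
      exacts [a.2, b.2, c.2]
    obtain ⟨R, hRexc, hmR⟩ := hample m (hnoidle m)
    obtain ⟨p, q, e, hRedges, hetgt⟩ := G.route_pred R m hmR (by rw [hsm]; exact hv.1)
    have hte : G.tgt e = v := hetgt.trans hsm
    have he' : ∃ e', G.tgt e' = v ∧ e' ≠ e := by
      by_cases h : e0 = e
      · exact ⟨e1, he1, fun hh => he1ne (hh.trans h.symm)⟩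
      · exact ⟨e0, he0, h⟩
    obtain ⟨e', he'tgt, he'e⟩ := he'
    rcases F.inlt_total e' e (he'tgt.trans hte.symm) (by rw [he'tgt]; exact hv) he'e
      with hl | hl
    · -- inlt e' e : Conflict F S R with S through (e', z), outlt m z
      have hsz : G.tgt e' = G.src z := he'tgt.trans ((F.outlt_src hmz).symm.trans hsm).symm
      obtain ⟨S, c', d', hS⟩ := G.exists_route_through e' z hsz
      exact (hRexc S).2 (G.conflict_of F S R c' d' p q e' z e m hS hRedges
        (hte.trans he'tgt.symm) hl hmz)
    · -- inlt e e' : Conflict F R S with S through (e', x), outlt x m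
      have hsx : G.tgt e' = G.src x := he'tgt.trans ((F.outlt_src hxm).trans hsm).symm
      obtain ⟨S, c', d', hS⟩ := G.exists_route_through e' x hsx
      exact (hRexc S).1 (G.conflict_of F R S p q c' d' e m e' x hRedges hS
        (he'tgt.trans hte.symm) hl hxm)
  exact ⟨by omega, by omega⟩
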